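/- Let E ⊂ ℂ be a Bernstein set, i.e. M(E,1) := sup{ ‖P'‖_E / deg P : deg P ≥ 1, ‖P‖_E = 1 } < ∞, and let M₁(E) := sup{ ‖P'‖_E : deg P ≤ 1, ‖P‖_E = 1 }. Then for all n ≥ 1 and r ≥ 0, (1 + M₁(E) r)^n ≤ φ_n(E,r) ≤ (1 + M(E,1) r)^n. -/

import Mathlib

open Polynomial

/-- Sup norm of a polynomial on a set `E ⊂ ℂ`. -/
noncomputable def supNorm (E : Set ℂ) (P : Polynomial ℂ) : ℝ :=
  sSup {x : ℝ | ∃ z ∈ E, x = ‖P.eval z‖}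

/-- `φ_n(E,r) = sup{ |P(z+ζ)| : z ∈ E, |ζ| ≤ r, deg P ≤ n, ‖P‖_E ≤ 1 }`. -/
noncomputable def phi (E : Set ℂ) (n : ℕ) (r : ℝ) : ℝ :=
  sSup {x : ℝ | ∃ (P : Polynomial ℂ) (z ζ : ℂ), z ∈ E ∧ ‖ζ‖ ≤ r ∧
    P.natDegree ≤ n ∧ supNorm E P ≤ 1 ∧ x = ‖P.eval (z + ζ)‖}

section Aux

lemma supNorm_set_eq (E : Set ℂ) (P : ℂ[X]) :
    {x : ℝ | ∃ z ∈ E, x = ‖P.eval z‖} = (fun z => ‖P.eval z‖) '' E := by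
  ext x; simp [eq_comm, Set.mem_image]

lemma supNorm_exists_max (E : Set ℂ) (hE : IsCompact E) (hEne : E.Nonempty) (P : ℂ[X]) :
    ∃ z ∈ E, supNorm E P = ‖P.eval z‖ ∧ ∀ w ∈ E, ‖P.eval w‖ ≤ ‖P.eval z‖ := by
  have hc : ContinuousOn (fun z => ‖P.eval z‖) E :=
    ((P.continuous).norm).continuousOn
  obtain ⟨z, hz, hmax⟩ := hE.exists_isMaxOn hEne hc
  refine ⟨z, hz, ?_, fun w hw => hmax hw⟩
  rw [_root_.supNorm, supNorm_set_eq]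
  exact IsGreatest.csSup_eq ⟨⟨z, hz, rfl⟩, fun x ⟨w, hw, hxw⟩ => hxw ▸ hmax hw⟩

lemma eval_le_supNorm (E : Set ℂ) (hE : IsCompact E) (hEne : E.Nonempty) (P : ℂ[X])
    {z : ℂ} (hz : z ∈ E) : ‖P.eval z‖ ≤ supNorm E P := by
  obtain ⟨w, hw, heq, hmax⟩ := supNorm_exists_max E hE hEne P
  exact heq ▸ hmax z hz

lemma supNorm_nonneg (E : Set ℂ) (hE : IsCompact E) (hEne : E.Nonempty) (P : ℂ[X]) :
    0 ≤ supNorm E P := by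
  obtain ⟨z, hz, heq, _⟩ := supNorm_exists_max E hE hEne P
  rw [heq]; positivity

lemma supNorm_smul (E : Set ℂ) (hE : IsCompact E) (hEne : E.Nonempty) (c : ℂ) (P : ℂ[X]) :
    supNorm E (c • P) = ‖c‖ * supNorm E P := by
  obtain ⟨z, hz, heq, hmax⟩ := supNorm_exists_max E hE hEne P
  obtain ⟨w, hw, heq', hmax'⟩ := supNorm_exists_max E hE hEne (c • P)
  apply le_antisymm
  · rw [heq', heq, eval_smul, norm_smul]
    exact mul_le_mul_of_nonneg_left (hmax w hw) (norm_nonneg c)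
  · rw [heq]
    calc ‖c‖ * ‖P.eval z‖ = ‖(c • P).eval z‖ := by rw [eval_smul, norm_smul]
    _ ≤ supNorm E (c • P) := eval_le_supNorm E hE hEne _ hz

lemma supNorm_pow (E : Set ℂ) (hE : IsCompact E) (hEne : E.Nonempty) (P : ℂ[X]) (k : ℕ) :
    supNorm E (P ^ k) = (supNorm E P) ^ k := by
  obtain ⟨z, hz, heq, hmax⟩ := supNorm_exists_max E hE hEne P
  obtain ⟨w, hw, heq', hmax'⟩ := supNorm_exists_max E hE hEne (P ^ k)
  apply le_antisymm
  · rw [heq', heq, eval_pow, norm_pow]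
    exact pow_le_pow_left₀ (norm_nonneg _) (hmax w hw) k
  · rw [heq]
    calc ‖P.eval z‖ ^ k = ‖(P ^ k).eval z‖ := by rw [eval_pow, norm_pow]
    _ ≤ supNorm E (P ^ k) := eval_le_supNorm E hE hEne _ hz

lemma supNorm_C (E : Set ℂ) (hE : IsCompact E) (hEne : E.Nonempty) (a : ℂ) :
    supNorm E (C a) = ‖a‖ := by
  obtain ⟨z, hz, heq, _⟩ := supNorm_exists_max E hE hEne (C a)
  simpa using heq

lemma supNorm_zero (E : Set ℂ) (hE : IsCompact E) (hEne : E.Nonempty) :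
    supNorm E (0 : ℂ[X]) = 0 := by
  simpa using supNorm_C E hE hEne 0

lemma supNorm_eq_zero_iff (E : Set ℂ) (hE : IsCompact E) (hEne : E.Nonempty) (P : ℂ[X]) :
    supNorm E P = 0 ↔ ∀ z ∈ E, P.eval z = 0 := by
  constructor
  · intro h z hz
    have := eval_le_supNorm E hE hEne P hz
    rw [h] at this
    simpa using le_antisymm this (norm_nonneg _)
  · intro h
    obtain ⟨z, hz, heq, _⟩ := supNorm_exists_max E hE hEne P
    rw [heq, h z hz, norm_zero]

end Aux

section Bernstein

variable (E : Set ℂ) (hE : IsCompact E) (hEne : E.Nonempty) (MB : ℝ)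
  (hMBub : ∀ x ∈ {x : ℝ | ∃ P : Polynomial ℂ, 1 ≤ P.natDegree ∧
      supNorm E P = 1 ∧ x = supNorm E (Polynomial.derivative P) / (P.natDegree : ℝ)}, x ≤ MB)

include hE hEne hMBub

lemma bernstein_aux {P : ℂ[X]} (hd : 1 ≤ P.natDegree) {t : ℝ} (ht : 0 < t)
    (hs : supNorm E P = t) :
    supNorm E (derivative P) ≤ MB * P.natDegree * t := by
  set Q : ℂ[X] := ((t : ℂ))⁻¹ • P with hQ
  have htc : ((t : ℂ)) ≠ 0 := by exact_mod_cast ne_of_gt ht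
  have hnorm : ‖((t : ℂ))⁻¹‖ = t⁻¹ := by
    rw [norm_inv, Complex.norm_real, Real.norm_eq_abs, abs_of_pos ht]
  have hdQ : Q.natDegree = P.natDegree := by
    rw [hQ, smul_eq_C_mul, natDegree_C_mul (inv_ne_zero htc)]
  have hsQ : supNorm E Q = 1 := by
    rw [hQ, supNorm_smul E hE hEne, hnorm, hs, inv_mul_cancel₀ (ne_of_gt ht)]
  have hmem : supNorm E (derivative Q) / (Q.natDegree : ℝ) ≤ MB :=
    hMBub _ ⟨Q, hdQ ▸ hd, hsQ, rfl⟩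
  have hdQ' : derivative Q = ((t : ℂ))⁻¹ • derivative P := by
    rw [hQ, derivative_smul]
  rw [hdQ', supNorm_smul E hE hEne, hnorm, hdQ] at hmem
  have hdpos : (0 : ℝ) < (P.natDegree : ℝ) := by exact_mod_cast hd
  rw [div_le_iff₀ hdpos] at hmem
  have := mul_le_mul_of_nonneg_left hmem (le_of_lt ht)
  calc supNorm E (derivative P) = t * (t⁻¹ * supNorm E (derivative P)) := by
        field_simp
  _ ≤ t * (MB * P.natDegree) := this
  _ = MB * P.natDegree * t := by ring

lemma bernstein_step {P : ℂ[X]} (hd : 1 ≤ P.natDegree) :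
    supNorm E (derivative P) ≤ MB * P.natDegree * supNorm E P := by
  rcases lt_or_eq_of_le (supNorm_nonneg E hE hEne P) with hpos | hzero
  · exact bernstein_aux E hE hEne MB hMBub hd hpos rfl
  · have hvan : ∀ z ∈ E, P.eval z = 0 :=
      (supNorm_eq_zero_iff E hE hEne P).mp hzero.symm
    have key : ∀ t : ℝ, 0 < t → supNorm E (derivative P) ≤ MB * P.natDegree * t := by
      intro t ht
      have hdQ : (P + C (t : ℂ)).natDegree = P.natDegree := natDegree_add_C
      have hsQ : supNorm E (P + C (t : ℂ)) = t := by
        obtain ⟨z, hz, heq, _⟩ := supNorm_exists_max E hE hEne (P + C (t : ℂ))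
        rw [heq, eval_add, eval_C, hvan z hz, zero_add, Complex.norm_real,
          Real.norm_eq_abs, abs_of_pos ht]
      have := bernstein_aux E hE hEne MB hMBub (P := P + C (t : ℂ)) (hdQ ▸ hd) ht hsQ
      simpa [hdQ] using this
    have hle : supNorm E (derivative P) ≤ 0 := by
      rcases le_or_gt (MB * P.natDegree) 0 with hMBd | hMBd
      · have := key 1 one_pos
        nlinarith
      · by_contra h
        push_neg at h
        have h2 := key (supNorm E (derivative P) / (2 * (MB * P.natDegree)))
          (by positivity)
        have h3 : MB * ↑P.natDegree * (supNorm E (derivative P) / (2 * (MB * ↑P.natDegree)))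
            = supNorm E (derivative P) / 2 := by
          field_simp
          exact mul_inv_cancel₀ (by rintro rfl; simp at hMBd)
        rw [h3] at h2
        linarith
    rw [← hzero, mul_zero]
    exact hle

variable (hMB0 : 0 ≤ MB)
include hMB0

lemma bernstein_iter (P : ℂ[X]) (k : ℕ) :
    supNorm E ((⇑derivative)^[k] P) ≤
      MB ^ k * (P.natDegree.descFactorial k : ℝ) * supNorm E P := by
  induction k with
  | zero => simp
  | succ k ih =>
    set Q : ℂ[X] := (⇑derivative)^[k] P with hQdef
    have hiter : (⇑derivative)^[k+1] P = derivative Q := by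
      rw [Function.iterate_succ_apply']
    rw [hiter]
    rcases Nat.eq_zero_or_pos Q.natDegree with h0 | hpos
    · obtain ⟨a, ha⟩ := natDegree_eq_zero.mp h0
      rw [← ha, derivative_C, supNorm_zero E hE hEne]
      have := supNorm_nonneg E hE hEne P
      positivity
    · have h1 := bernstein_step E hE hEne MB hMBub hpos
      have hdQ : (Q.natDegree : ℝ) ≤ ((P.natDegree - k : ℕ) : ℝ) := by
        exact_mod_cast natDegree_iterate_derivative P k
      have hQnn := supNorm_nonneg E hE hEne Q
      have hPnn := supNorm_nonneg E hE hEne P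
      calc supNorm E (derivative Q) ≤ MB * Q.natDegree * supNorm E Q := h1
      _ ≤ MB * ((P.natDegree - k : ℕ) : ℝ) *
            (MB ^ k * (P.natDegree.descFactorial k : ℝ) * supNorm E P) := by
          have h2 : MB * (Q.natDegree : ℝ) ≤ MB * ((P.natDegree - k : ℕ) : ℝ) :=
            mul_le_mul_of_nonneg_left hdQ hMB0
          have h3 : supNorm E Q ≤ MB ^ k * (P.natDegree.descFactorial k : ℝ) * supNorm E P := ih
          exact mul_le_mul h2 h3 hQnn (by positivity)
      _ = MB ^ (k+1) * (P.natDegree.descFactorial (k+1) : ℝ) * supNorm E P := by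
          rw [Nat.descFactorial_succ]
          push_cast
          ring

lemma hasse_bound (P : ℂ[X]) (k : ℕ) :
    supNorm E (hasseDeriv k P) ≤ (P.natDegree.choose k : ℝ) * MB ^ k * supNorm E P := by
  have h1 : (k.factorial : ℕ) • hasseDeriv k P = (⇑derivative)^[k] P := by
    have := Polynomial.factorial_smul_hasseDeriv (R := ℂ) k
    exact congrFun this P
  have h2 : ((k.factorial : ℂ)) • hasseDeriv k P = (⇑derivative)^[k] P := by
    rw [← h1, Nat.cast_smul_eq_nsmul]
  have h3 : (k.factorial : ℝ) * supNorm E (hasseDeriv k P)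
      = supNorm E ((⇑derivative)^[k] P) := by
    rw [← h2, supNorm_smul E hE hEne]
    norm_num
  have h4 := bernstein_iter E hE hEne MB hMBub hMB0 P k
  rw [← h3] at h4
  have h5 : (P.natDegree.descFactorial k : ℝ)
      = (k.factorial : ℝ) * (P.natDegree.choose k : ℝ) := by
    exact_mod_cast congrArg (Nat.cast (R := ℝ)) (Nat.descFactorial_eq_factorial_mul_choose _ k)
  have hkpos : (0:ℝ) < (k.factorial : ℝ) := by exact_mod_cast k.factorial_pos
  rw [h5] at h4
  have := (mul_le_mul_iff_right₀ hkpos).mp (by linarith [h4] :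
    (k.factorial : ℝ) * supNorm E (hasseDeriv k P)
      ≤ (k.factorial : ℝ) * ((P.natDegree.choose k : ℝ) * MB ^ k * supNorm E P))
  linarith

lemma eval_shift_le (n : ℕ) (r : ℝ) (hr : 0 ≤ r) (P : ℂ[X]) (hdP : P.natDegree ≤ n)
    (hsP : supNorm E P ≤ 1) {z : ℂ} (hz : z ∈ E) {ζ : ℂ} (hζ : ‖ζ‖ ≤ r) :
    ‖P.eval (z + ζ)‖ ≤ (1 + MB * r) ^ n := by
  have hPnn := supNorm_nonneg E hE hEne P
  have heval : P.eval (z + ζ) = (taylor z P).eval ζ := by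
    rw [taylor_eval, add_comm]
  rw [heval, eval_eq_sum_range, natDegree_taylor]
  calc ‖∑ i ∈ Finset.range (P.natDegree + 1), (taylor z P).coeff i * ζ ^ i‖
      ≤ ∑ i ∈ Finset.range (P.natDegree + 1), ‖(taylor z P).coeff i * ζ ^ i‖ :=
        norm_sum_le _ _
    _ ≤ ∑ i ∈ Finset.range (P.natDegree + 1), (n.choose i : ℝ) * (MB * r) ^ i := by
        apply Finset.sum_le_sum
        intro i hi
        rw [norm_mul, norm_pow]
        have hc : ‖(taylor z P).coeff i‖ ≤ (P.natDegree.choose i : ℝ) * MB ^ i := by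
          rw [taylor_coeff]
          calc ‖(hasseDeriv i P).eval z‖ ≤ supNorm E (hasseDeriv i P) :=
                eval_le_supNorm E hE hEne _ hz
          _ ≤ (P.natDegree.choose i : ℝ) * MB ^ i * supNorm E P :=
                hasse_bound E hE hEne MB hMBub hMB0 P i
          _ ≤ (P.natDegree.choose i : ℝ) * MB ^ i * 1 := by
                apply mul_le_mul_of_nonneg_left hsP
                positivity
          _ = (P.natDegree.choose i : ℝ) * MB ^ i := mul_one _
        have hz2 : ‖ζ‖ ^ i ≤ r ^ i := pow_le_pow_left₀ (norm_nonneg _) hζ i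
        have hch : (P.natDegree.choose i : ℝ) ≤ (n.choose i : ℝ) := by
          exact_mod_cast Nat.choose_le_choose i hdP
        calc ‖(taylor z P).coeff i‖ * ‖ζ‖ ^ i
            ≤ ((P.natDegree.choose i : ℝ) * MB ^ i) * r ^ i := by
              apply mul_le_mul hc hz2 (by positivity) (by positivity)
          _ ≤ ((n.choose i : ℝ) * MB ^ i) * r ^ i := by
              apply mul_le_mul_of_nonneg_right _ (by positivity)
              exact mul_le_mul_of_nonneg_right hch (by positivity)
          _ = (n.choose i : ℝ) * (MB * r) ^ i := by rw [mul_pow]; ring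
    _ ≤ ∑ i ∈ Finset.range (n + 1), (n.choose i : ℝ) * (MB * r) ^ i := by
        apply Finset.sum_le_sum_of_subset_of_nonneg
        · exact Finset.range_subset_range.mpr (by omega)
        · intro i _ _; positivity
    _ = (1 + MB * r) ^ n := by
        rw [show (1:ℝ) + MB * r = MB * r + 1 from add_comm _ _, add_pow]
        apply Finset.sum_congr rfl
        intro i _
        rw [one_pow]
        ring

end Bernstein

section Lower

variable (E : Set ℂ) (hE : IsCompact E) (hEne : E.Nonempty)

include hE hEne

lemma MBset_mem : ∃ x, (∃ P : Polynomial ℂ, 1 ≤ P.natDegree ∧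
    supNorm E P = 1 ∧ x = supNorm E (Polynomial.derivative P) / (P.natDegree : ℝ)) ∧ 0 ≤ x := by
  obtain ⟨z₀, hz₀⟩ := id hEne
  by_cases hsing : ∃ z₁ ∈ E, z₁ ≠ z₀
  · obtain ⟨z₁, hz₁, hne⟩ := hsing
    set P : ℂ[X] := X - C z₀ with hP
    have hs : 0 < supNorm E P := by
      have h1 : ‖P.eval z₁‖ ≤ supNorm E P := eval_le_supNorm E hE hEne P hz₁
      have h2 : 0 < ‖P.eval z₁‖ := by
        simp only [hP, eval_sub, eval_X, eval_C, norm_pos_iff]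
        exact sub_ne_zero_of_ne hne
      linarith
    set Q : ℂ[X] := ((supNorm E P : ℂ))⁻¹ • P with hQ
    have htc : ((supNorm E P : ℂ)) ≠ 0 := by exact_mod_cast ne_of_gt hs
    have hdQ : Q.natDegree = 1 := by
      rw [hQ, smul_eq_C_mul, natDegree_C_mul (inv_ne_zero htc), hP, natDegree_X_sub_C]
    have hsQ : supNorm E Q = 1 := by
      rw [hQ, supNorm_smul E hE hEne, norm_inv, Complex.norm_real, Real.norm_eq_abs,
        abs_of_pos hs, inv_mul_cancel₀ (ne_of_gt hs)]
    refine ⟨_, ⟨Q, by omega, hsQ, rfl⟩, ?_⟩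
    have := supNorm_nonneg E hE hEne (derivative Q)
    positivity
  · push_neg at hsing
    set P : ℂ[X] := X + C (1 - z₀) with hP
    have hdP : P.natDegree = 1 := natDegree_X_add_C _
    have hsP : supNorm E P = 1 := by
      obtain ⟨z, hz, heq, _⟩ := supNorm_exists_max E hE hEne P
      have hzz : z = z₀ := hsing z hz
      rw [heq, hzz, hP]
      simp
    refine ⟨_, ⟨P, by omega, hsP, rfl⟩, ?_⟩
    have := supNorm_nonneg E hE hEne (derivative P)
    positivity

lemma lower_mem (n : ℕ) (hn : 1 ≤ n) (r : ℝ) (hr : 0 ≤ r)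
    (hbdd : BddAbove {x : ℝ | ∃ (P : Polynomial ℂ) (z ζ : ℂ), z ∈ E ∧ ‖ζ‖ ≤ r ∧
      P.natDegree ≤ n ∧ supNorm E P ≤ 1 ∧ x = ‖P.eval (z + ζ)‖})
    {x : ℝ} (hx : ∃ P : Polynomial ℂ, P.natDegree ≤ 1 ∧
      supNorm E P = 1 ∧ x = supNorm E (Polynomial.derivative P)) :
    (1 + x * r) ^ n ≤ phi E n r := by
  obtain ⟨P, hdP, hsP, hxval⟩ := hx
  set b := P.coeff 1 with hb
  have hPeq : P = C b * X + C (P.coeff 0) := eq_X_add_C_of_natDegree_le_one hdP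
  have hder : derivative P = C b := by
    conv_lhs => rw [hPeq]
    simp
  have hxb : x = ‖b‖ := by rw [hxval, hder, supNorm_C E hE hEne]
  obtain ⟨z, hz, heq, hmax⟩ := supNorm_exists_max E hE hEne P
  have hu1 : ‖P.eval z‖ = 1 := by rw [← heq, hsP]
  set u := P.eval z with hu
  by_cases hb0 : b = 0
  · have hx0 : x = 0 := by rw [hxb, hb0, norm_zero]
    have hmem : (1:ℝ) ∈ {x : ℝ | ∃ (P : Polynomial ℂ) (z ζ : ℂ), z ∈ E ∧ ‖ζ‖ ≤ r ∧
        P.natDegree ≤ n ∧ supNorm E P ≤ 1 ∧ x = ‖P.eval (z + ζ)‖} := by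
      exact ⟨P, z, 0, hz, by simpa using hr, le_trans hdP hn, le_of_eq hsP, by
        simp [← hu, hu1]⟩
    calc (1 + x * r) ^ n = 1 := by rw [hx0]; norm_num
    _ ≤ _ := by rw [phi]; exact le_csSup hbdd hmem
  · set ζ : ℂ := (r : ℂ) * u * (starRingEnd ℂ b) / (‖b‖ : ℂ) with hζdef
    have hbn : (‖b‖ : ℝ) ≠ 0 := norm_ne_zero_iff.mpr hb0
    have hbc : ((‖b‖ : ℝ) : ℂ) ≠ 0 := by exact_mod_cast hbn
    have hnn : ‖((‖b‖ : ℝ) : ℂ)‖ = ‖b‖ := by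
      rw [Complex.norm_real, Real.norm_eq_abs, abs_of_nonneg (norm_nonneg b)]
    have hζnorm : ‖ζ‖ = r := by
      rw [hζdef, norm_div, norm_mul, norm_mul, hnn, hu1, RCLike.norm_conj,
        Complex.norm_real, Real.norm_eq_abs, abs_of_nonneg hr]
      rw [mul_one, mul_div_assoc, div_self hbn, mul_one]
    have hbb : b * starRingEnd ℂ b = ((‖b‖ : ℂ)) ^ 2 := by
      rw [Complex.mul_conj]
      norm_cast
      rw [Complex.normSq_eq_norm_sq]
    have hbζ : b * ζ = (r : ℂ) * u * (‖b‖ : ℂ) := by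
      calc b * ζ = (r : ℂ) * u * (b * starRingEnd ℂ b) / (‖b‖ : ℂ) := by
            rw [hζdef]; ring
      _ = (r : ℂ) * u * ((‖b‖ : ℂ))^2 / (‖b‖ : ℂ) := by rw [hbb]
      _ = (r : ℂ) * u * (‖b‖ : ℂ) := by
            have hcc : ((‖b‖ : ℂ))^2 / (‖b‖ : ℂ) = (‖b‖ : ℂ) := by
              rw [sq]; exact mul_div_cancel_right₀ _ hbc
            rw [mul_div_assoc, hcc]
    have hPev : ∀ w : ℂ, P.eval w = b * w + P.coeff 0 := by
      intro w; conv_lhs => rw [hPeq]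
      simp
    have hu' : u = b * z + P.coeff 0 := by rw [hu, hPev]
    have hkey : P.eval (z + ζ) = u * (1 + (r : ℂ) * (‖b‖ : ℂ)) := by
      rw [hPev]
      have hsplit : b * (z + ζ) = b * z + (r : ℂ) * u * (‖b‖ : ℂ) := by
        rw [mul_add, hbζ]
      rw [hsplit, hu']
      ring
    have hnorm2 : ‖P.eval (z + ζ)‖ = 1 + r * ‖b‖ := by
      rw [hkey, norm_mul, hu1, one_mul]
      have : (1 + (r : ℂ) * (‖b‖ : ℂ)) = ((1 + r * ‖b‖ : ℝ) : ℂ) := by push_cast; ring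
      rw [this, Complex.norm_real, Real.norm_eq_abs, abs_of_nonneg (by positivity)]
    have hmem : ((1 + r * ‖b‖) ^ n : ℝ) ∈ {x : ℝ | ∃ (P : Polynomial ℂ) (z ζ : ℂ), z ∈ E ∧ ‖ζ‖ ≤ r ∧
        P.natDegree ≤ n ∧ supNorm E P ≤ 1 ∧ x = ‖P.eval (z + ζ)‖} := by
      refine ⟨P ^ n, z, ζ, hz, le_of_eq hζnorm, ?_, ?_, ?_⟩
      · rw [natDegree_pow]
        calc n * P.natDegree ≤ n * 1 := Nat.mul_le_mul_left n hdP
        _ = n := Nat.mul_one n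
      · rw [supNorm_pow E hE hEne, hsP, one_pow]
      · rw [eval_pow, norm_pow, hnorm2]
    have := le_csSup hbdd hmem
    rw [phi]
    calc (1 + x * r) ^ n = (1 + r * ‖b‖) ^ n := by rw [hxb]; ring_nf
    _ ≤ _ := this

end Lower

/-- if `E ⊂ ℂ` is a Bernstein set with constant
`M(E,1) = sup{‖P'‖_E/deg P : deg P ≥ 1, ‖P‖_E = 1}` and
`M₁(E) = sup{‖P'‖_E : deg P ≤ 1, ‖P‖_E = 1}`, then
`(1 + M₁(E) r)^n ≤ φ_n(E,r) ≤ (1 + M(E,1) r)^n`. -/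
theorem stmt7 (E : Set ℂ) (hE : IsCompact E) (hEne : E.Nonempty)
    (MB M₁ : ℝ)
    (hMB : MB = sSup {x : ℝ | ∃ P : Polynomial ℂ, 1 ≤ P.natDegree ∧
      supNorm E P = 1 ∧ x = supNorm E (Polynomial.derivative P) / (P.natDegree : ℝ)})
    (hMBfin : BddAbove {x : ℝ | ∃ P : Polynomial ℂ, 1 ≤ P.natDegree ∧
      supNorm E P = 1 ∧ x = supNorm E (Polynomial.derivative P) / (P.natDegree : ℝ)})
    (hM₁ : M₁ = sSup {x : ℝ | ∃ P : Polynomial ℂ, P.natDegree ≤ 1 ∧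
      supNorm E P = 1 ∧ x = supNorm E (Polynomial.derivative P)})
    (n : ℕ) (hn : 1 ≤ n) (r : ℝ) (hr : 0 ≤ r) :
    (1 + M₁ * r) ^ n ≤ phi E n r ∧ phi E n r ≤ (1 + MB * r) ^ n := by
  have hMBub : ∀ x ∈ {x : ℝ | ∃ P : Polynomial ℂ, 1 ≤ P.natDegree ∧
      supNorm E P = 1 ∧ x = supNorm E (Polynomial.derivative P) / (P.natDegree : ℝ)}, x ≤ MB :=
    fun x hx => hMB ▸ le_csSup hMBfin hx
  have hMB0 : 0 ≤ MB := by
    obtain ⟨x, hxS, hx0⟩ := MBset_mem E hE hEne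
    exact le_trans hx0 (hMBub x hxS)
  have hub : ∀ x ∈ {x : ℝ | ∃ (P : Polynomial ℂ) (z ζ : ℂ), z ∈ E ∧ ‖ζ‖ ≤ r ∧
      P.natDegree ≤ n ∧ supNorm E P ≤ 1 ∧ x = ‖P.eval (z + ζ)‖}, x ≤ (1 + MB * r) ^ n := by
    rintro x ⟨P, z, ζ, hz, hζ, hdP, hsP, rfl⟩
    exact eval_shift_le E hE hEne MB hMBub hMB0 n r hr P hdP hsP hz hζ
  have hbdd : BddAbove {x : ℝ | ∃ (P : Polynomial ℂ) (z ζ : ℂ), z ∈ E ∧ ‖ζ‖ ≤ r ∧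
      P.natDegree ≤ n ∧ supNorm E P ≤ 1 ∧ x = ‖P.eval (z + ζ)‖} := ⟨_, hub⟩
  obtain ⟨z₀, hz₀⟩ := id hEne
  have hone : (1:ℝ) ∈ {x : ℝ | ∃ (P : Polynomial ℂ) (z ζ : ℂ), z ∈ E ∧ ‖ζ‖ ≤ r ∧
      P.natDegree ≤ n ∧ supNorm E P ≤ 1 ∧ x = ‖P.eval (z + ζ)‖} := by
    refine ⟨C 1, z₀, 0, hz₀, by simpa using hr, ?_, ?_, ?_⟩
    · simp
    · rw [supNorm_C E hE hEne]; simp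
    · simp
  have hphi1 : 1 ≤ phi E n r := by rw [phi]; exact le_csSup hbdd hone
  have hupper : phi E n r ≤ (1 + MB * r) ^ n := by
    rw [phi]; exact csSup_le ⟨1, hone⟩ hub
  refine ⟨?_, hupper⟩
  -- lower bound
  have h0mem : (0:ℝ) ∈ {x : ℝ | ∃ P : Polynomial ℂ, P.natDegree ≤ 1 ∧
      supNorm E P = 1 ∧ x = supNorm E (Polynomial.derivative P)} := by
    refine ⟨C 1, by simp, ?_, ?_⟩
    · rw [supNorm_C E hE hEne]; simp
    · rw [derivative_C, supNorm_zero E hE hEne]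
  have hS₁ne : {x : ℝ | ∃ P : Polynomial ℂ, P.natDegree ≤ 1 ∧
      supNorm E P = 1 ∧ x = supNorm E (Polynomial.derivative P)}.Nonempty := ⟨0, h0mem⟩
  have hM₁0 : 0 ≤ M₁ := by
    by_cases hb : BddAbove {x : ℝ | ∃ P : Polynomial ℂ, P.natDegree ≤ 1 ∧
        supNorm E P = 1 ∧ x = supNorm E (Polynomial.derivative P)}
    · rw [hM₁]; exact le_csSup hb h0mem
    · rw [hM₁, Real.sSup_of_not_bddAbove hb]
  rcases eq_or_lt_of_le hr with hr0 | hrpos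
  · subst hr0
    simpa using hphi1
  · set y := (phi E n r) ^ ((n:ℝ)⁻¹) with hy
    have hphinn : (0:ℝ) ≤ phi E n r := by linarith
    have hnne : (n:ℝ) ≠ 0 := by positivity
    have hyn : y ^ n = phi E n r := by
      rw [hy, ← Real.rpow_natCast ((phi E n r) ^ ((n:ℝ)⁻¹)) n, ← Real.rpow_mul hphinn,
        inv_mul_cancel₀ hnne, Real.rpow_one]
    have hynn : (0:ℝ) ≤ y := Real.rpow_nonneg hphinn _
    have hstep : ∀ x ∈ {x : ℝ | ∃ P : Polynomial ℂ, P.natDegree ≤ 1 ∧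
        supNorm E P = 1 ∧ x = supNorm E (Polynomial.derivative P)}, x ≤ (y - 1)/r := by
      intro x hx
      have hx0 : 0 ≤ x := by
        obtain ⟨P, _, _, hxe⟩ := hx
        rw [hxe]
        exact supNorm_nonneg E hE hEne _
      have hkey : (1 + x*r)^n ≤ phi E n r := lower_mem E hE hEne n hn r hr hbdd hx
      rw [← hyn] at hkey
      have hxr : 0 ≤ 1 + x * r := by nlinarith
      have h1xy : 1 + x * r ≤ y :=
        (pow_le_pow_iff_left₀ hxr hynn (by omega)).mp hkey
      rw [le_div_iff₀ hrpos]
      linarith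
    have hM₁le : M₁ ≤ (y - 1)/r := hM₁ ▸ csSup_le hS₁ne hstep
    have h1 : 1 + M₁ * r ≤ y := by
      rw [le_div_iff₀ hrpos] at hM₁le
      linarith
    calc (1 + M₁ * r) ^ n ≤ y ^ n :=
          pow_le_pow_left₀ (by nlinarith) h1 n
    _ = phi E n r := hyn
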